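/- Suppose X1 = A·Z0 + B·U0. Let F_des be a set of matrices [F, F_r] ∈ ℝ^{n×(s+m_r)} and define 𝒦_ext := {[K, K_r] ∈ ℝ^{m×(s+m_r)} : there exist [F*, F_r*] ∈ F_des and G ∈ ℝ^{N×(s+m_r)} with the stacked block equation [[F*, F_r*]; [I_s, 0]; [K, K_r]] = [X1; Z0; U0]·G}. If there exists [F*, F_r*] ∈ F_des with im [[F*, F_r*]; [I_s, 0]] ⊆ im [X1; Z0], then: (i) 𝒦_ext is nonempty; and (ii) every [K, K_r] ∈ 𝒦_ext satisfies A + B·K = F* and B·K_r = F_r* for some [F*, F_r*] ∈ F_des, hence [A + B·K, B·K_r] ∈ F_des. -/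

import Mathlib

open Matrix

/-- Column space of a matrix: the range of the linear map `x ↦ M x`. -/
def imCol {p q : Type*} [Fintype q] (M : Matrix p q ℝ) : Submodule ℝ (p → ℝ) :=
  LinearMap.range M.mulVecLin

/-- `𝒦_ext`: pairs `(K, K_r)` for which there exist `(F*, F_r*) ∈ F_des` and `G` with
`[[F*, F_r*]; [I_s, 0]; [K, K_r]] = [X1; Z0; U0] G`. -/
def calKext (n m mr s N : ℕ) (X1 : Matrix (Fin n) (Fin N) ℝ) (Z0 : Matrix (Fin s) (Fin N) ℝ)
    (U0 : Matrix (Fin m) (Fin N) ℝ)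
    (Fdes : Set (Matrix (Fin n) (Fin s) ℝ × Matrix (Fin n) (Fin mr) ℝ)) :
    Set (Matrix (Fin m) (Fin s) ℝ × Matrix (Fin m) (Fin mr) ℝ) :=
  {KK | ∃ FF ∈ Fdes, ∃ G : Matrix (Fin N) (Fin s ⊕ Fin mr) ℝ,
    Matrix.fromRows
        (Matrix.fromRows (Matrix.fromCols FF.1 FF.2)
          (Matrix.fromCols (1 : Matrix (Fin s) (Fin s) ℝ) (0 : Matrix (Fin s) (Fin mr) ℝ)))
        (Matrix.fromCols KK.1 KK.2) =
      Matrix.fromRows (Matrix.fromRows X1 Z0) U0 * G}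

/-- If the column space of `M` is contained in that of `P`, then `M = P * G` for some `G`. -/
lemma exists_factor {p q r : Type*} [Fintype q] [Fintype r] [DecidableEq r]
    (M : Matrix p r ℝ) (P : Matrix p q ℝ) (h : imCol M ≤ imCol P) :
    ∃ G : Matrix q r ℝ, M = P * G := by
  have hj : ∀ j : r, ∃ v : q → ℝ, P *ᵥ v = M *ᵥ Pi.single j 1 := by
    intro j
    exact h ⟨Pi.single j 1, rfl⟩
  choose g hg using hj
  refine ⟨Matrix.of fun i j => g j i, ?_⟩
  ext i j
  have := congrFun (hg j) i
  simp only [mulVec, dotProduct, Pi.single_apply, mul_ite, mul_one, mul_zero,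
    Finset.sum_ite_eq', Finset.mem_univ, if_true] at this
  rw [Matrix.mul_apply]
  rw [← this]
  rfl

/-- Data-driven design for open systems: if `X1 = A Z0 + B U0` and there exists
`(F*, F_r*) ∈ F_des` with `im [[F*, F_r*]; [I_s, 0]] ⊆ im [X1; Z0]`, then `𝒦_ext` is
nonempty and every `(K, K_r) ∈ 𝒦_ext` satisfies `A + B K = F*` and `B K_r = F_r*` for
some `(F*, F_r*) ∈ F_des`. -/
theorem stmt11 (n m mr s N : ℕ)
    (A : Matrix (Fin n) (Fin s) ℝ) (B : Matrix (Fin n) (Fin m) ℝ)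
    (X1 : Matrix (Fin n) (Fin N) ℝ) (Z0 : Matrix (Fin s) (Fin N) ℝ)
    (U0 : Matrix (Fin m) (Fin N) ℝ)
    (hdata : X1 = A * Z0 + B * U0)
    (Fdes : Set (Matrix (Fin n) (Fin s) ℝ × Matrix (Fin n) (Fin mr) ℝ))
    (hne : ∃ FF ∈ Fdes,
      imCol (Matrix.fromRows (Matrix.fromCols FF.1 FF.2)
          (Matrix.fromCols (1 : Matrix (Fin s) (Fin s) ℝ)
            (0 : Matrix (Fin s) (Fin mr) ℝ))) ≤
        imCol (Matrix.fromRows X1 Z0)) :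
    (calKext n m mr s N X1 Z0 U0 Fdes).Nonempty ∧
    (∀ KK ∈ calKext n m mr s N X1 Z0 U0 Fdes,
      ∃ FF ∈ Fdes, A + B * KK.1 = FF.1 ∧ B * KK.2 = FF.2) := by
  constructor
  · obtain ⟨FF, hFF, hle⟩ := hne
    obtain ⟨G, hG⟩ := exists_factor _ _ hle
    refine ⟨((U0 * G).toCols₁, (U0 * G).toCols₂), FF, hFF, G, ?_⟩
    rw [Matrix.fromRows_mul, fromCols_toCols, ← hG]
  · rintro KK ⟨FF, hFF, G, hG⟩
    rw [Matrix.fromRows_mul, Matrix.fromRows_mul] at hG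
    obtain ⟨h12, h3⟩ := fromRows_inj hG
    obtain ⟨h1, h2⟩ := fromRows_inj h12
    refine ⟨FF, hFF, ?_⟩
    have hX : X1 * G = A * (Z0 * G) + B * (U0 * G) := by
      rw [hdata, Matrix.add_mul, Matrix.mul_assoc, Matrix.mul_assoc]
    have hadd : ∀ (a c : Matrix (Fin n) (Fin s) ℝ) (b d : Matrix (Fin n) (Fin mr) ℝ),
        Matrix.fromCols a b + Matrix.fromCols c d = Matrix.fromCols (a + c) (b + d) := by
      intro a c b d
      ext i j
      cases j <;> simp [Matrix.fromCols]
    rw [← h1, ← h2, ← h3, Matrix.mul_fromCols, Matrix.mul_fromCols, hadd,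
      Matrix.mul_one, Matrix.mul_zero, zero_add] at hX
    obtain ⟨e1, e2⟩ := fromCols_inj hX
    exact ⟨e1.symm, e2.symm⟩
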